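/- Let E and F be Banach spaces. Suppose that neither E nor the dual F* has the Schur property, and that every bounded linear operator from F* into E** is completely continuous. Then the injective tensor product E ⊗̂ε F does not have the Dunford–Pettis property. -/

import Mathlib

open Filter Topology MeasureTheory

/-- A sequence in a normed space is *weakly null* if it converges to `0` in the weak topology,
i.e. `φ (x n) → 0` for every continuous linear functional `φ`. -/
def WeaklyNull {E : Type*} [NormedAddCommGroup E] [NormedSpace ℝ E] (x : ℕ → E) : Prop :=
  ∀ φ : E →L[ℝ] ℝ, Tendsto (fun n => φ (x n)) atTop (𝓝 0)

/-- An operator is *completely continuous* if it maps weakly convergent sequences to norm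
convergent sequences. -/
def CompletelyContinuous {E F : Type*} [NormedAddCommGroup E] [NormedSpace ℝ E]
    [NormedAddCommGroup F] [NormedSpace ℝ F] (T : E →L[ℝ] F) : Prop :=
  ∀ (x : ℕ → E) (x₀ : E),
    (∀ φ : E →L[ℝ] ℝ, Tendsto (fun n => φ (x n)) atTop (𝓝 (φ x₀))) →
    Tendsto (fun n => T (x n)) atTop (𝓝 (T x₀))

/-- A Banach space has the *Schur property* if every weakly null sequence is norm null. -/
def SchurProperty (E : Type*) [NormedAddCommGroup E] [NormedSpace ℝ E] : Prop :=
  ∀ x : ℕ → E, WeaklyNull x → Tendsto x atTop (𝓝 0)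

/-- A Banach space has the *Dunford–Pettis property* if `φₙ(xₙ) → 0` whenever `(xₙ)` is weakly
null in `E` and `(φₙ)` is weakly null in the dual `E*`. -/
def DunfordPettisProperty (E : Type*) [NormedAddCommGroup E] [NormedSpace ℝ E] : Prop :=
  ∀ (x : ℕ → E) (φ : ℕ → E →L[ℝ] ℝ), WeaklyNull x → WeaklyNull φ →
    Tendsto (fun n => φ n (x n)) atTop (𝓝 0)

/-- `F` contains a (closed, isomorphic) copy of `X`: there is an isomorphic embedding of `X`
into `F` (its range is automatically a closed subspace when `X` is complete). -/
def ContainsCopy (F X : Type*) [NormedAddCommGroup F] [NormedSpace ℝ F]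
    [NormedAddCommGroup X] [NormedSpace ℝ X] : Prop :=
  ∃ (e : X →L[ℝ] F) (c : ℝ), 0 < c ∧ ∀ x, c * ‖x‖ ≤ ‖e x‖

/-- `F` contains a *complemented* copy of `X`: there is an embedding `e : X → F` admitting a
bounded linear left inverse (equivalently, a complemented closed subspace isomorphic to `X`). -/
def ContainsComplementedCopy (F X : Type*) [NormedAddCommGroup F] [NormedSpace ℝ F]
    [NormedAddCommGroup X] [NormedSpace ℝ X] : Prop :=
  ∃ (e : X →L[ℝ] F) (r : F →L[ℝ] X), r.comp e = ContinuousLinearMap.id ℝ X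

/-- A realization of the projective tensor product `E ⊗̂π F` as a Banach space `X`:
a bounded bilinear map `tmul` of norm `≤ 1` whose range spans a dense subspace, and such that
every bounded bilinear form on `E × F` lifts to a functional on `X` of no greater norm.
Together with completeness of `X`, these properties characterize `E ⊗̂π F` up to isometric
isomorphism. -/
structure ProjectiveTensorProduct (X E F : Type*) [NormedAddCommGroup X] [NormedSpace ℝ X]
    [NormedAddCommGroup E] [NormedSpace ℝ E] [NormedAddCommGroup F] [NormedSpace ℝ F] where
  tmul : E →L[ℝ] F →L[ℝ] X
  norm_tmul_le : ∀ x y, ‖tmul x y‖ ≤ ‖x‖ * ‖y‖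
  dense_span : Dense (↑(Submodule.span ℝ (Set.range fun p : E × F => tmul p.1 p.2)) : Set X)
  lift : ∀ B : E →L[ℝ] F →L[ℝ] ℝ, ∃ φ : X →L[ℝ] ℝ, ‖φ‖ ≤ ‖B‖ ∧ ∀ x y, φ (tmul x y) = B x y

/-- A realization of the injective tensor product `E ⊗̂ε F` as a Banach space `X`:
a bilinear map `tmul` whose range spans a dense subspace and such that the norm of any finite
sum of elementary tensors is the injective norm
`sup { |Σ φ(xᵢ) ψ(yᵢ)| : ‖φ‖ ≤ 1, ‖ψ‖ ≤ 1 }`.  Together with completeness of `X`, these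
properties characterize `E ⊗̂ε F` up to isometric isomorphism. -/
structure InjectiveTensorProduct (X E F : Type*) [NormedAddCommGroup X] [NormedSpace ℝ X]
    [NormedAddCommGroup E] [NormedSpace ℝ E] [NormedAddCommGroup F] [NormedSpace ℝ F] where
  tmul : E →L[ℝ] F →L[ℝ] X
  dense_span : Dense (↑(Submodule.span ℝ (Set.range fun p : E × F => tmul p.1 p.2)) : Set X)
  norm_sum : ∀ (n : ℕ) (x : Fin n → E) (y : Fin n → F),
    ‖∑ i, tmul (x i) (y i)‖ =
      sSup { r : ℝ | ∃ (φ : E →L[ℝ] ℝ) (ψ : F →L[ℝ] ℝ), ‖φ‖ ≤ 1 ∧ ‖ψ‖ ≤ 1 ∧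
        r = |∑ i, φ (x i) * ψ (y i)| }

/-- The Banach space `ℓ₁` of absolutely summable real sequences. -/
noncomputable abbrev ellOne : Type := lp (fun _ : ℕ => ℝ) 1


open Set
open scoped ENNReal NNReal

lemma pos_functional_dct {K : Type*} [TopologicalSpace K] [CompactSpace K] [T2Space K]
    [Nonempty K]
    (Λ : C(K, ℝ) →L[ℝ] ℝ) (hΛ : ∀ g : C(K, ℝ), (∀ x, 0 ≤ g x) → 0 ≤ Λ g)
    (f : ℕ → C(K, ℝ)) (M : ℝ)
    (hfM : ∀ n x, (f n) x ≤ M)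
    (hf0 : ∀ n x, 0 ≤ (f n) x)
    (hpt : ∀ x : K, Tendsto (fun n => (f n) x) atTop (𝓝 0)) :
    Tendsto (fun n => Λ (f n)) atTop (𝓝 0) := by
  classical
  set S : Set K → Set ℝ := fun C =>
    (fun g => Λ g) '' {g : C(K, ℝ) | (∀ x, 0 ≤ g x) ∧ ∀ x ∈ C, 1 ≤ g x} with hS
  have hne : ∀ C : Set K, (S C).Nonempty := fun C =>
    ⟨Λ 1, ⟨1, ⟨fun x => by simp, fun x _ => by simp⟩, rfl⟩⟩
  have hbdd : ∀ C, BddBelow (S C) := fun C =>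
    ⟨0, by rintro r ⟨g, hg, rfl⟩; exact hΛ g hg.1⟩
  set lam : Set K → ℝ := fun C => sInf (S C) with hlamdef
  have lam_nonneg : ∀ C, 0 ≤ lam C := fun C =>
    le_csInf (hne C) (by rintro r ⟨g, hg, rfl⟩; exact hΛ g hg.1)
  have lam_le : ∀ (C : Set K) (g : C(K, ℝ)), (∀ x, 0 ≤ g x) → (∀ x ∈ C, 1 ≤ g x) →
      lam C ≤ Λ g := fun C g h1 h2 => csInf_le (hbdd C) ⟨g, ⟨h1, h2⟩, rfl⟩
  have lam_mono : ∀ C D : Set K, C ⊆ D → lam C ≤ lam D := by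
    intro C D hCD
    exact le_csInf (hne D) (by
      rintro r ⟨g, ⟨hg0, hg1⟩, rfl⟩
      exact lam_le C g hg0 fun x hx => hg1 x (hCD hx))
  have lam_subadd : ∀ C D : Set K, lam (C ∪ D) ≤ lam C + lam D := by
    intro C D
    refine le_of_forall_pos_le_add ?_
    intro ε hε
    obtain ⟨r1, hr1mem, hr1⟩ := Real.lt_sInf_add_pos (hne C) (half_pos hε)
    obtain ⟨r2, hr2mem, hr2⟩ := Real.lt_sInf_add_pos (hne D) (half_pos hε)
    obtain ⟨g1, ⟨hg10, hg11⟩, rfl⟩ := hr1mem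
    obtain ⟨g2, ⟨hg20, hg21⟩, rfl⟩ := hr2mem
    have hadm : lam (C ∪ D) ≤ Λ (g1 + g2) := by
      refine lam_le _ _ (fun x => by
        have := hg10 x; have := hg20 x; simp only [ContinuousMap.add_apply]; linarith) ?_
      intro x hx
      rcases hx with hx | hx
      · have := hg11 x hx; have := hg20 x; simp only [ContinuousMap.add_apply]; linarith
      · have := hg21 x hx; have := hg10 x; simp only [ContinuousMap.add_apply]; linarith
    rw [map_add] at hadm
    have : lam C + lam D + ε = (lam C + ε/2) + (lam D + ε/2) := by ring
    linarith
  have lam_add : ∀ C D : Set K, IsClosed C → IsClosed D → Disjoint C D →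
      lam C + lam D ≤ lam (C ∪ D) := by
    intro C D hC hD hdis
    obtain ⟨u, hu0, hu1, hu01⟩ := exists_continuous_zero_one_of_isClosed hC hD hdis
    refine le_csInf (hne _) ?_
    rintro r ⟨g, ⟨hg0, hg1⟩, rfl⟩
    have h1 : lam C ≤ Λ (g * (1 - u)) := by
      refine lam_le _ _ (fun x => ?_) (fun x hx => ?_)
      · have := (hu01 x).2
        simp only [ContinuousMap.mul_apply, ContinuousMap.sub_apply, ContinuousMap.one_apply]
        have := hg0 x; nlinarith
      · have hux : u x = 0 := hu0 hx
        have := hg1 x (Or.inl hx)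
        simp only [ContinuousMap.mul_apply, ContinuousMap.sub_apply, ContinuousMap.one_apply, hux]
        linarith
    have h2 : lam D ≤ Λ (g * u) := by
      refine lam_le _ _ (fun x => ?_) (fun x hx => ?_)
      · have := (hu01 x).1
        simp only [ContinuousMap.mul_apply]
        have := hg0 x; nlinarith
      · have hux : u x = 1 := hu1 hx
        have := hg1 x (Or.inr hx)
        simp only [ContinuousMap.mul_apply, hux]
        linarith
    have h3 : Λ (g * (1 - u)) + Λ (g * u) = Λ g := by
      rw [← map_add]; congr 1; ring
    linarith
  letI : MeasurableSpace K := borel K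
  haveI : BorelSpace K := ⟨rfl⟩
  set μC : Content K :=
    { toFun := fun C => Real.toNNReal (lam C)
      mono' := fun C D h => Real.toNNReal_mono (lam_mono _ _ h)
      sup_disjoint' := by
        intro C D hdis hCcl hDcl
        have heq : lam (↑(C ⊔ D) : Set K) = lam ↑C + lam ↑D := by
          rw [TopologicalSpace.Compacts.coe_sup]
          exact le_antisymm (lam_subadd _ _) (lam_add _ _ hCcl hDcl hdis)
        show Real.toNNReal (lam (↑(C ⊔ D) : Set K)) =
          Real.toNNReal (lam ↑C) + Real.toNNReal (lam ↑D)
        rw [heq, Real.toNNReal_add (lam_nonneg _) (lam_nonneg _)]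
      sup_le' := by
        intro C D
        have : lam (↑(C ⊔ D) : Set K) ≤ lam ↑C + lam ↑D := by
          rw [TopologicalSpace.Compacts.coe_sup]; exact lam_subadd _ _
        show Real.toNNReal (lam (↑(C ⊔ D) : Set K)) ≤
          Real.toNNReal (lam ↑C) + Real.toNNReal (lam ↑D)
        calc Real.toNNReal (lam (↑(C ⊔ D) : Set K)) ≤
            Real.toNNReal (lam ↑C + lam ↑D) := Real.toNNReal_mono this
          _ = Real.toNNReal (lam ↑C) + Real.toNNReal (lam ↑D) :=
            Real.toNNReal_add (lam_nonneg _) (lam_nonneg _) } with hμC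
  set μ : Measure K := μC.measure with hμ
  have hcomp : ∀ (C : Set K) (hC : IsCompact C) (U : Set K) (hU : IsOpen U), C ⊆ U →
      (Real.toNNReal (lam C) : ℝ≥0∞) ≤ μ U := by
    intro C hC U hU hCU
    rw [hμ, μC.measure_apply hU.measurableSet, μC.outerMeasure_of_isOpen U hU]
    exact μC.le_innerContent ⟨C, hC⟩ ⟨U, hU⟩ hCU
  have hfin : μ Set.univ ≠ ⊤ := by
    rw [hμ, μC.measure_apply MeasurableSet.univ, μC.outerMeasure_of_isOpen _ isOpen_univ]
    have hle : μC.innerContent ⟨Set.univ, isOpen_univ⟩ ≤ (Real.toNNReal (Λ 1) : ℝ≥0∞) := by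
      refine iSup₂_le fun C hC => ?_
      exact ENNReal.coe_le_coe.mpr (Real.toNNReal_mono
        (lam_le _ 1 (fun x => by simp) (fun x _ => by simp)))
    exact (hle.trans_lt ENNReal.coe_lt_top).ne
  rw [Metric.tendsto_atTop]
  intro ε hε
  have hL1 : 0 ≤ Λ 1 := hΛ 1 (by simp)
  have hM0 : 0 ≤ M := le_trans (hf0 0 (Classical.arbitrary K)) (hfM 0 _)
  set ε₀ := ε / (2 * (Λ 1 + 1)) with hε₀def
  have hε₀ : 0 < ε₀ := by positivity
  set Fs : ℕ → Set K := fun n => {x | ε₀ ≤ f n x} with hFs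
  set Us : ℕ → Set K := fun n => {x | ε₀ / 2 < f n x} with hUs
  set Vs : ℕ → Set K := fun N => ⋃ n, ⋃ (_ : N ≤ n), Us n with hVs
  have hUopen : ∀ n, IsOpen (Us n) := fun n => isOpen_lt continuous_const (f n).continuous
  have hVopen : ∀ N, IsOpen (Vs N) := fun N =>
    isOpen_iUnion fun n => isOpen_iUnion fun _ => hUopen n
  have hVanti : Antitone Vs := by
    intro N N' hle
    exact Set.iUnion₂_subset fun n hn => Set.subset_iUnion₂ (s := fun n _ => Us n) n
      (le_trans hle hn)
  have hVempty : ⋂ N, Vs N = ∅ := by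
    ext x
    simp only [Set.mem_iInter, Set.mem_iUnion, Set.mem_empty_iff_false, iff_false, not_forall]
    have := hpt x
    rw [Metric.tendsto_atTop] at this
    obtain ⟨N, hN⟩ := this (ε₀ / 2) (by positivity)
    refine ⟨N, ?_⟩
    intro hmem
    rw [Set.mem_iUnion₂] at hmem
    obtain ⟨n, hn, hxn⟩ := hmem
    have h1 := hN n hn
    rw [Real.dist_eq, sub_zero, abs_of_nonneg (hf0 n x)] at h1
    have h2 : ε₀ / 2 < f n x := hxn
    linarith
  have htend : Tendsto (μ ∘ Vs) atTop (𝓝 0) := by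
    have := tendsto_measure_iInter_atTop (μ := μ) (s := Vs)
      (fun N => (hVopen N).measurableSet.nullMeasurableSet) hVanti
      ⟨0, ((measure_mono (Set.subset_univ _)).trans_lt (lt_top_iff_ne_top.mpr hfin)).ne⟩
    rwa [hVempty, measure_empty] at this
  have hsmall : ∀ᶠ N in atTop, μ (Vs N) < ENNReal.ofReal (ε / (2 * (M + 1))) := by
    refine htend.eventually_lt_const ?_
    exact ENNReal.ofReal_pos.mpr (by positivity)
  obtain ⟨N₀, hN₀⟩ := eventually_atTop.mp hsmall
  refine ⟨N₀, fun n hn => ?_⟩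
  have hFc : IsCompact (Fs n) :=
    (isClosed_le continuous_const (f n).continuous).isCompact
  have hFU : Fs n ⊆ Vs n := by
    intro x hx
    refine Set.mem_iUnion₂.mpr ⟨n, le_rfl, ?_⟩
    simp only [hUs, Set.mem_setOf_eq]
    have : ε₀ ≤ f n x := hx
    linarith
  have hlamle : (Real.toNNReal (lam (Fs n)) : ℝ≥0∞) ≤ μ (Vs n) :=
    hcomp _ hFc _ (hVopen n) hFU
  have h3 : lam (Fs n) < ε / (2 * (M + 1)) := by
    by_contra hcon
    push_neg at hcon
    have h4 : ENNReal.ofReal (ε / (2 * (M + 1))) ≤ (Real.toNNReal (lam (Fs n)) : ℝ≥0∞) := by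
      rw [ENNReal.ofReal]
      exact ENNReal.coe_le_coe.mpr (Real.toNNReal_mono hcon)
    exact absurd ((h4.trans hlamle).trans_lt (hN₀ n hn)) (lt_irrefl _)
  have key : Λ (f n) ≤ ε₀ * Λ 1 + (M + 1) * lam (Fs n) := by
    have hdiv : (Λ (f n) - ε₀ * Λ 1) / (M + 1) ≤ lam (Fs n) := by
      refine le_csInf (hne _) ?_
      rintro r ⟨g, ⟨hg0, hg1⟩, rfl⟩
      rw [div_le_iff₀ (by linarith : (0:ℝ) < M + 1)]
      have hΛle : Λ (f n) ≤ Λ (ε₀ • (1 : C(K, ℝ)) + (M + 1) • g) := by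
        have hnn := hΛ ((ε₀ • (1 : C(K, ℝ)) + (M + 1) • g) - f n) (fun x => by
          simp only [ContinuousMap.sub_apply, ContinuousMap.add_apply,
            ContinuousMap.smul_apply, ContinuousMap.one_apply, smul_eq_mul]
          by_cases hx : x ∈ Fs n
          · have := hg1 x hx; have := hfM n x; nlinarith
          · have hlt : f n x < ε₀ := not_le.mp hx
            have := hg0 x; nlinarith)
        rw [map_sub] at hnn
        linarith
      rw [map_add, ContinuousLinearMap.map_smul, ContinuousLinearMap.map_smul, smul_eq_mul, smul_eq_mul] at hΛle
      linarith
    rw [div_le_iff₀ (by linarith : (0:ℝ) < M + 1)] at hdiv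
    linarith [mul_comm (lam (Fs n)) (M + 1)]
  have hfinal : Λ (f n) < ε := by
    have hlam3 : (M + 1) * lam (Fs n) ≤ (M + 1) * (ε / (2 * (M + 1))) :=
      mul_le_mul_of_nonneg_left h3.le (by linarith)
    have heq1 : (M + 1) * (ε / (2 * (M + 1))) = ε / 2 := by
      field_simp
    have heq2 : ε₀ * (Λ 1 + 1) = ε / 2 := by
      rw [hε₀def]
      field_simp
    nlinarith
  rw [Real.dist_eq, sub_zero, abs_of_nonneg (hΛ (f n) (hf0 n))]
  exact hfinal


lemma summing_tendsto_zero {E : Type*} [NormedAddCommGroup E] [NormedSpace ℝ E]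
    (N : E → ℝ) (hN0 : ∀ z, 0 ≤ N z)
    (hNsmul : ∀ (c : ℝ) (z : E), 0 ≤ c → N (c • z) = c * N z)
    (C : ℝ)
    (hsum : ∀ (n : ℕ) (u : Fin n → E) (ε : ℝ), 0 < ε → ∀ b : ℝ,
      (∀ φ : E →L[ℝ] ℝ, ‖φ‖ ≤ 1 → ∑ i, |φ (u i)| ≤ b) → ∑ i, N (u i) ≤ C * b + ε)
    (x : ℕ → E) (M : ℝ) (hx : ∀ n, ‖x n‖ ≤ M)
    (hweak : ∀ φ : E →L[ℝ] ℝ, Tendsto (fun n => φ (x n)) atTop (𝓝 0)) :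
    Tendsto (fun n => N (x n)) atTop (𝓝 0) := by
  classical
  set Kb : Set (WeakDual ℝ E) := WeakDual.toStrongDual ⁻¹' Metric.closedBall 0 1 with hKb
  have hKbcomp : IsCompact Kb := WeakDual.isCompact_closedBall (𝕜 := ℝ) (0 : StrongDual ℝ E) 1
  haveI : CompactSpace Kb := isCompact_iff_compactSpace.mp hKbcomp
  haveI : Nonempty Kb := ⟨⟨0, by
    simp only [hKb, Set.mem_preimage, map_zero]
    exact Metric.mem_closedBall_self zero_le_one⟩⟩
  have hnorm : ∀ φ : Kb, ‖WeakDual.toStrongDual φ.1‖ ≤ 1 := fun φ => by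
    have h2 := φ.2
    simp only [hKb, Set.mem_preimage, Metric.mem_closedBall, dist_zero_right] at h2
    exact h2
  have hevcont : ∀ u : E, Continuous fun φ : Kb => |(φ.1 : WeakDual ℝ E) u| :=
    fun u => ((WeakDual.eval_continuous u).comp continuous_subtype_val).abs
  set ev : E → C(Kb, ℝ) := fun u => ⟨fun φ => |(φ.1 : WeakDual ℝ E) u|, hevcont u⟩ with hev
  have hev_apply : ∀ (u : E) (φ : Kb), ev u φ = |(φ.1 : WeakDual ℝ E) u| := fun u φ => rfl
  set gm : (Σ n : ℕ, Fin n → E) → C(Kb, ℝ) := fun p =>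
    (∑ i, N (p.2 i)) • (1 : C(Kb, ℝ)) - C • ∑ i, ev (p.2 i) with hgm
  have hgm_apply : ∀ (p : Σ n : ℕ, Fin n → E) (φ : Kb),
      gm p φ = ∑ i, N (p.2 i) - C * ∑ i, |(φ.1 : WeakDual ℝ E) (p.2 i)| := by
    intro p φ
    simp only [hgm, ContinuousMap.sub_apply, ContinuousMap.smul_apply, ContinuousMap.one_apply,
      smul_eq_mul, mul_one]
    congr 1
    rw [ContinuousMap.sum_apply]
    simp [hev_apply]
  set G : Set C(Kb, ℝ) := Set.range gm with hG
  set P : Set C(Kb, ℝ) := {g | ∀ φ, 0 < g φ} with hP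
  -- convexity of G
  have hGconv : Convex ℝ G := by
    rintro g1 ⟨⟨n, u⟩, rfl⟩ g2 ⟨⟨m, v⟩, rfl⟩ a b ha hb hab
    refine ⟨⟨n + m, Fin.append (fun i => a • u i) (fun j => b • v j)⟩, ?_⟩
    apply ContinuousMap.ext
    intro φ
    have happ := hgm_apply
    rw [ContinuousMap.add_apply, ContinuousMap.smul_apply, ContinuousMap.smul_apply,
      happ, happ, happ]
    simp only [smul_eq_mul]
    rw [Fin.sum_univ_add, Fin.sum_univ_add]
    simp only [Fin.append_left, Fin.append_right]
    have h1 : ∀ i, N (a • u i) = a * N (u i) := fun i => hNsmul a (u i) ha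
    have h2 : ∀ j, N (b • v j) = b * N (v j) := fun j => hNsmul b (v j) hb
    have h3 : ∀ i, |(φ.1 : WeakDual ℝ E) (a • u i)| = a * |(φ.1 : WeakDual ℝ E) (u i)| :=
      fun i => by rw [_root_.map_smul, smul_eq_mul, abs_mul, abs_of_nonneg ha]
    have h4 : ∀ j, |(φ.1 : WeakDual ℝ E) (b • v j)| = b * |(φ.1 : WeakDual ℝ E) (v j)| :=
      fun j => by rw [_root_.map_smul, smul_eq_mul, abs_mul, abs_of_nonneg hb]
    simp only [h1, h2, h3, h4, ← Finset.mul_sum]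
    ring
  -- convexity of P
  have hPconv : Convex ℝ P := by
    rintro g1 hg1 g2 hg2 a b ha hb hab φ
    rw [ContinuousMap.add_apply, ContinuousMap.smul_apply, ContinuousMap.smul_apply]
    have h1 := hg1 φ
    have h2 := hg2 φ
    simp only [smul_eq_mul]
    rcases eq_or_lt_of_le ha with h | h
    · rw [← h] at hab ⊢; simp only [zero_mul, zero_add]; rw [zero_add] at hab
      rw [hab]; simpa using h2
    · nlinarith
  -- P is open
  have hPopen : IsOpen P := by
    rw [Metric.isOpen_iff]
    intro g hg
    obtain ⟨φ₀, -, hφ₀⟩ := isCompact_univ.exists_isMinOn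
      ⟨Classical.arbitrary Kb, Set.mem_univ _⟩ g.continuous.continuousOn
    refine ⟨g φ₀, hg φ₀, fun g' hg' => ?_⟩
    intro φ
    rw [Metric.mem_ball, dist_eq_norm] at hg'
    have h2 : |g' φ - g φ| ≤ ‖g' - g‖ := by
      have h3 := ContinuousMap.norm_coe_le_norm (g' - g) φ
      simpa [Real.norm_eq_abs] using h3
    have h4 : g φ - g' φ ≤ |g' φ - g φ| := by rw [abs_sub_comm]; exact le_abs_self _
    have h5 := isMinOn_iff.mp hφ₀ φ (Set.mem_univ φ)
    have h6 := hg φ₀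
    linarith
  -- disjointness
  have hdisj : Disjoint P G := by
    rw [Set.disjoint_right]
    rintro g ⟨⟨n, u⟩, rfl⟩ hPmem
    have hcont : Continuous fun φ : Kb => ∑ i, |(φ.1 : WeakDual ℝ E) (u i)| :=
      continuous_finset_sum _ fun i _ => hevcont (u i)
    obtain ⟨φm, -, hmax'⟩ := isCompact_univ.exists_isMaxOn
      ⟨Classical.arbitrary Kb, Set.mem_univ _⟩ hcont.continuousOn
    have hmax := isMaxOn_iff.mp hmax'
    set b := ∑ i, |(φm.1 : WeakDual ℝ E) (u i)| with hb
    have hub : ∀ φ : E →L[ℝ] ℝ, ‖φ‖ ≤ 1 → ∑ i, |φ (u i)| ≤ b := by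
      intro φ hφ
      have hmem : StrongDual.toWeakDual φ ∈ Kb := by
        simp only [hKb, Set.mem_preimage, Metric.mem_closedBall, dist_zero_right]
        exact hφ
      exact hmax ⟨StrongDual.toWeakDual φ, hmem⟩ (Set.mem_univ _)
    have hstrict : 0 < ∑ i, N (u i) - C * b := by
      have := hPmem φm
      rwa [hgm_apply] at this
    have hcontr := hsum n u ((∑ i, N (u i) - C * b) / 2) (half_pos hstrict) b hub
    linarith
  -- separation
  obtain ⟨Ψ, t, hPlt, hGge⟩ := geometric_hahn_banach_open hPconv hPopen hGconv hdisj
  have h0G : (0 : C(Kb, ℝ)) ∈ G := by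
    refine ⟨⟨0, Fin.elim0⟩, ?_⟩
    apply ContinuousMap.ext
    intro φ
    rw [hgm_apply]
    simp
  have ht0 : t ≤ 0 := by
    have := hGge 0 h0G
    rwa [map_zero] at this
  have honeP : ∀ s : ℝ, 0 < s → (s • (1 : C(Kb, ℝ))) ∈ P := by
    intro s hs φ
    rw [ContinuousMap.smul_apply, ContinuousMap.one_apply, smul_eq_mul, mul_one]
    exact hs
  have hΨ1neg : Ψ (1 : C(Kb, ℝ)) < 0 := by
    have := hPlt 1 (by simpa using honeP 1 one_pos)
    linarith
  -- positivity of Λ := -Ψ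
  have hΛpos : ∀ g : C(Kb, ℝ), (∀ φ, 0 ≤ g φ) → Ψ g ≤ 0 := by
    intro g hg
    refine le_of_forall_pos_le_add ?_
    intro ε hε
    set s := ε / (|Ψ (1 : C(Kb, ℝ))| + 1) with hs
    have hspos : 0 < s := by positivity
    have hmem : (g + s • (1 : C(Kb, ℝ))) ∈ P := by
      intro φ
      rw [ContinuousMap.add_apply, ContinuousMap.smul_apply, ContinuousMap.one_apply,
        smul_eq_mul, mul_one]
      have := hg φ
      linarith
    have h1 := hPlt _ hmem
    rw [map_add, ContinuousLinearMap.map_smul, smul_eq_mul] at h1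
    have h2 : s * |Ψ (1 : C(Kb, ℝ))| ≤ ε := by
      rw [hs]
      rw [div_mul_eq_mul_div, div_le_iff₀ (by positivity)]
      have := abs_nonneg (Ψ (1 : C(Kb, ℝ)))
      nlinarith
    have h3 : -(s * Ψ (1 : C(Kb, ℝ))) ≤ s * |Ψ (1 : C(Kb, ℝ))| := by
      have h4 : -Ψ (1 : C(Kb, ℝ)) ≤ |Ψ (1 : C(Kb, ℝ))| := neg_le_abs _
      calc -(s * Ψ (1 : C(Kb, ℝ))) = s * (-Ψ (1 : C(Kb, ℝ))) := by ring
        _ ≤ s * |Ψ (1 : C(Kb, ℝ))| := mul_le_mul_of_nonneg_left h4 hspos.le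
    linarith
  -- domination
  have hdom : ∀ z : E, N z * (-Ψ (1 : C(Kb, ℝ))) ≤ C * (-Ψ (ev z)) := by
    intro z
    by_contra hcon
    push_neg at hcon
    set a := N z * Ψ (1 : C(Kb, ℝ)) - C * Ψ (ev z) with ha
    have hane : a < 0 := by simp only [ha]; linarith
    set s := (t - 1) / a with hsdef
    have hspos : 0 < s := by
      apply div_pos_of_neg_of_neg
      · linarith
      · exact hane
    have hmemG : gm ⟨1, fun _ => s • z⟩ ∈ G := ⟨_, rfl⟩
    have h1 := hGge _ hmemG
    have hgmeq : gm ⟨1, fun _ => s • z⟩ =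
        (s * N z) • (1 : C(Kb, ℝ)) - (s * C) • ev z := by
      apply ContinuousMap.ext
      intro φ
      rw [hgm_apply]
      simp only [Fin.sum_univ_one, ContinuousMap.sub_apply, ContinuousMap.smul_apply,
        ContinuousMap.one_apply, smul_eq_mul, mul_one, hev_apply]
      rw [hNsmul s z hspos.le, _root_.map_smul, smul_eq_mul, abs_mul, abs_of_nonneg hspos.le]
      ring
    rw [hgmeq, map_sub, ContinuousLinearMap.map_smul, ContinuousLinearMap.map_smul,
      smul_eq_mul, smul_eq_mul] at h1
    have h2 : t ≤ s * a := by rw [ha]; ring_nf; ring_nf at h1; linarith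
    rw [hsdef, div_mul_cancel₀ _ hane.ne] at h2
    linarith
  -- apply DCT
  have hΛ1pos : 0 < -Ψ (1 : C(Kb, ℝ)) := by linarith
  have hdct : Tendsto (fun n => (-Ψ) (ev (x n))) atTop (𝓝 0) := by
    refine pos_functional_dct (-Ψ) (fun g hg => ?_) (fun n => ev (x n)) M
      (fun n φ => ?_) (fun n φ => abs_nonneg _) (fun φ => ?_)
    · simp only [ContinuousLinearMap.neg_apply, Left.nonneg_neg_iff]
      exact hΛpos g hg
    · rw [hev_apply]
      calc |(φ.1 : WeakDual ℝ E) (x n)| = ‖(WeakDual.toStrongDual φ.1) (x n)‖ := rfl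
        _ ≤ ‖WeakDual.toStrongDual φ.1‖ * ‖x n‖ := ContinuousLinearMap.le_opNorm _ _
        _ ≤ 1 * M := by
            apply mul_le_mul (hnorm φ) (hx n) (norm_nonneg _)
            exact zero_le_one
        _ = M := one_mul M
    · have := (hweak (WeakDual.toStrongDual φ.1)).abs
      rw [abs_zero] at this
      exact this
  -- squeeze
  have hsq : ∀ n, N (x n) ≤ (C / (-Ψ (1 : C(Kb, ℝ)))) * ((-Ψ) (ev (x n))) := by
    intro n
    have := hdom (x n)
    rw [div_mul_eq_mul_div, le_div_iff₀ hΛ1pos]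
    simp only [ContinuousLinearMap.neg_apply]
    linarith
  have hlim : Tendsto (fun n => (C / (-Ψ (1 : C(Kb, ℝ)))) * ((-Ψ) (ev (x n)))) atTop (𝓝 0) := by
    have := hdct.const_mul (C / (-Ψ (1 : C(Kb, ℝ))))
    simpa using this
  exact squeeze_zero (fun t => hN0 (x t)) hsq hlim


lemma exists_tensor_functional {E F X : Type*} [NormedAddCommGroup E] [NormedSpace ℝ E]
    [NormedAddCommGroup F] [NormedSpace ℝ F] [NormedAddCommGroup X] [NormedSpace ℝ X]
    (h : InjectiveTensorProduct X E F) (φ : E →L[ℝ] ℝ) (ψ : F →L[ℝ] ℝ) :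
    ∃ Φ : X →L[ℝ] ℝ, ‖Φ‖ ≤ ‖φ‖ * ‖ψ‖ ∧ ∀ a b, Φ (h.tmul a b) = φ a * ψ b := by
  classical
  set bilT : E →ₗ[ℝ] F →ₗ[ℝ] X :=
    { toFun := fun a => (h.tmul a).toLinearMap
      map_add' := fun a₁ a₂ => by ext b; simp
      map_smul' := fun c a => by ext b; simp } with hbilT
  set T : TensorProduct ℝ E F →ₗ[ℝ] X := TensorProduct.lift bilT with hT
  set bilg : E →ₗ[ℝ] F →ₗ[ℝ] ℝ :=
    { toFun := fun a => φ a • (ψ.toLinearMap : F →ₗ[ℝ] ℝ)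
      map_add' := fun a₁ a₂ => by ext b; simp [add_smul]
      map_smul' := fun c a => by ext b; simp [smul_eq_mul]; ring } with hbilg
  set g : TensorProduct ℝ E F →ₗ[ℝ] ℝ := TensorProduct.lift bilg with hg
  have hT_tmul : ∀ a b, T (a ⊗ₜ[ℝ] b) = h.tmul a b := fun a b => by
    simp [hT, hbilT, TensorProduct.lift.tmul]
  have hg_tmul : ∀ a b, g (a ⊗ₜ[ℝ] b) = φ a * ψ b := fun a b => by
    simp [hg, hbilg, TensorProduct.lift.tmul, smul_eq_mul]
  -- the key norm bound coming from the injective tensor norm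
  have hcore : ∀ (n : ℕ) (u : Fin n → E) (v : Fin n → F),
      |∑ i, φ (u i) * ψ (v i)| ≤ ‖φ‖ * ‖ψ‖ * ‖∑ i, h.tmul (u i) (v i)‖ := by
    intro n u v
    rcases eq_or_ne φ 0 with rfl | hφ0
    · simp
    rcases eq_or_ne ψ 0 with rfl | hψ0
    · simp
    have hφn : (0:ℝ) < ‖φ‖ := norm_pos_iff.mpr hφ0
    have hψn : (0:ℝ) < ‖ψ‖ := norm_pos_iff.mpr hψ0
    set φ' : E →L[ℝ] ℝ := ‖φ‖⁻¹ • φ with hφ'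
    set ψ' : F →L[ℝ] ℝ := ‖ψ‖⁻¹ • ψ with hψ'
    have hφ'n : ‖φ'‖ ≤ 1 := le_of_eq (norm_smul_inv_norm hφ0)
    have hψ'n : ‖ψ'‖ ≤ 1 := le_of_eq (norm_smul_inv_norm hψ0)
    have hbddA : BddAbove { r : ℝ | ∃ (φ₁ : E →L[ℝ] ℝ) (ψ₁ : F →L[ℝ] ℝ), ‖φ₁‖ ≤ 1 ∧ ‖ψ₁‖ ≤ 1 ∧
        r = |∑ i, φ₁ (u i) * ψ₁ (v i)| } := by
      refine ⟨∑ i, ‖u i‖ * ‖v i‖, ?_⟩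
      rintro r ⟨φ₁, ψ₁, hφ₁, hψ₁, rfl⟩
      calc |∑ i, φ₁ (u i) * ψ₁ (v i)| ≤ ∑ i, |φ₁ (u i) * ψ₁ (v i)| :=
            Finset.abs_sum_le_sum_abs _ _
        _ ≤ ∑ i, ‖u i‖ * ‖v i‖ := by
            refine Finset.sum_le_sum fun i _ => ?_
            rw [abs_mul]
            have h1 : |φ₁ (u i)| ≤ ‖u i‖ := by
              have := φ₁.le_opNorm (u i)
              rw [Real.norm_eq_abs] at this
              calc |φ₁ (u i)| ≤ ‖φ₁‖ * ‖u i‖ := this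
                _ ≤ 1 * ‖u i‖ := mul_le_mul_of_nonneg_right hφ₁ (norm_nonneg _)
                _ = ‖u i‖ := one_mul _
            have h2 : |ψ₁ (v i)| ≤ ‖v i‖ := by
              have := ψ₁.le_opNorm (v i)
              rw [Real.norm_eq_abs] at this
              calc |ψ₁ (v i)| ≤ ‖ψ₁‖ * ‖v i‖ := this
                _ ≤ 1 * ‖v i‖ := mul_le_mul_of_nonneg_right hψ₁ (norm_nonneg _)
                _ = ‖v i‖ := one_mul _
            exact mul_le_mul h1 h2 (abs_nonneg _) (norm_nonneg _)
    have hmem : |∑ i, φ' (u i) * ψ' (v i)| ∈ { r : ℝ | ∃ (φ₁ : E →L[ℝ] ℝ) (ψ₁ : F →L[ℝ] ℝ),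
        ‖φ₁‖ ≤ 1 ∧ ‖ψ₁‖ ≤ 1 ∧ r = |∑ i, φ₁ (u i) * ψ₁ (v i)| } :=
      ⟨φ', ψ', hφ'n, hψ'n, rfl⟩
    have hle := le_csSup hbddA hmem
    rw [← h.norm_sum n u v] at hle
    have heq : ∑ i, φ' (u i) * ψ' (v i) = (‖φ‖⁻¹ * ‖ψ‖⁻¹) * ∑ i, φ (u i) * ψ (v i) := by
      rw [Finset.mul_sum]
      refine Finset.sum_congr rfl fun i _ => ?_
      rw [hφ', hψ']
      simp only [ContinuousLinearMap.smul_apply, smul_eq_mul]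
      ring
    rw [heq, abs_mul, abs_of_nonneg (by positivity : (0:ℝ) ≤ ‖φ‖⁻¹ * ‖ψ‖⁻¹)] at hle
    calc |∑ i, φ (u i) * ψ (v i)|
        = (‖φ‖ * ‖ψ‖) * ((‖φ‖⁻¹ * ‖ψ‖⁻¹) * |∑ i, φ (u i) * ψ (v i)|) := by
          field_simp
      _ ≤ (‖φ‖ * ‖ψ‖) * ‖∑ i, h.tmul (u i) (v i)‖ := by
          refine mul_le_mul_of_nonneg_left hle (by positivity)
      _ = ‖φ‖ * ‖ψ‖ * ‖∑ i, h.tmul (u i) (v i)‖ := rfl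
  have hbound : ∀ w : TensorProduct ℝ E F, |g w| ≤ ‖φ‖ * ‖ψ‖ * ‖T w‖ := by
    intro w
    obtain ⟨Sf, rfl⟩ := TensorProduct.exists_finset w
    set n := Sf.card with hn
    set eqv := Sf.equivFin with heqv
    set u : Fin n → E := fun i => (eqv.symm i : E × F).1 with hu
    set v : Fin n → F := fun i => (eqv.symm i : E × F).2 with hv
    have hsum1 : (Sf.sum fun p => p.1 ⊗ₜ[ℝ] p.2) = ∑ i, u i ⊗ₜ[ℝ] v i := by
      rw [← Finset.sum_attach Sf fun p => p.1 ⊗ₜ[ℝ] p.2]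
      refine Fintype.sum_equiv eqv _ _ fun p => ?_
      simp [hu, hv]
    rw [hsum1, map_sum, map_sum]
    simp only [hg_tmul, hT_tmul]
    exact hcore n u v
  -- the subspace and the functional on it
  set S : Submodule ℝ X := LinearMap.range T with hS
  have hSR : S = Submodule.span ℝ (Set.range fun p : E × F => h.tmul p.1 p.2) := by
    apply le_antisymm
    · rintro z ⟨w, rfl⟩
      induction w using TensorProduct.induction_on with
      | zero => simp only [map_zero]; exact Submodule.zero_mem _
      | tmul a b =>
          rw [hT_tmul]
          exact Submodule.subset_span ⟨(a, b), rfl⟩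
      | add w₁ w₂ hw₁ hw₂ =>
          rw [map_add]
          exact Submodule.add_mem _ hw₁ hw₂
    · rw [Submodule.span_le]
      rintro z ⟨p, rfl⟩
      exact ⟨p.1 ⊗ₜ[ℝ] p.2, hT_tmul p.1 p.2⟩
  have hker : LinearMap.ker T ≤ LinearMap.ker g := by
    intro w hw
    rw [LinearMap.mem_ker] at hw ⊢
    have := hbound w
    rw [hw, norm_zero, mul_zero] at this
    exact abs_eq_zero.mp (le_antisymm this (abs_nonneg _))
  set linF : S →ₗ[ℝ] ℝ :=
    (Submodule.liftQ (LinearMap.ker T) g hker).comp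
      ((LinearMap.quotKerEquivRange T).symm : (LinearMap.range T) ≃ₗ[ℝ] _).toLinearMap
    with hlinF
  have hlinF_val : ∀ (w : TensorProduct ℝ E F) (z : S), (z : X) = T w → linF z = g w := by
    intro w z hz
    have hz' : z = ⟨T w, ⟨w, rfl⟩⟩ := Subtype.ext hz
    subst hz'
    have h1 : (LinearMap.quotKerEquivRange T).symm ⟨T w, ⟨w, rfl⟩⟩ =
        Submodule.Quotient.mk w := by
      rw [LinearEquiv.symm_apply_eq]
      exact Subtype.ext (LinearMap.quotKerEquivRange_apply_mk T w)
    rw [hlinF]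
    simp only [LinearMap.coe_comp, LinearEquiv.coe_coe, Function.comp_apply]
    rw [h1, Submodule.liftQ_apply]
  have hlinF_bound : ∀ z : S, ‖linF z‖ ≤ (‖φ‖ * ‖ψ‖) * ‖z‖ := by
    intro z
    obtain ⟨w, hw⟩ := z.2
    rw [hlinF_val w z hw.symm]
    have h1 : ‖z‖ = ‖T w‖ := by
      calc ‖z‖ = ‖(z : X)‖ := rfl
        _ = ‖T w‖ := by rw [hw]
    rw [h1, Real.norm_eq_abs]
    exact hbound w
  set f0 : S →L[ℝ] ℝ := LinearMap.mkContinuous linF (‖φ‖ * ‖ψ‖) hlinF_bound with hf0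
  set e : S →L[ℝ] X := S.subtypeL with he
  have h_dense : DenseRange e := by
    have h1 : Set.range e = (S : Set X) := Subtype.range_coe
    rw [DenseRange, h1]
    have h2 : (S : Set X) = (Submodule.span ℝ (Set.range fun p : E × F => h.tmul p.1 p.2) : Set X) := by
      rw [hSR]
    rw [h2]
    exact h.dense_span
  have h_e : ∀ z : S, ‖z‖ ≤ (1 : ℝ≥0) * ‖e z‖ := fun z => by
    rw [NNReal.coe_one, one_mul]
    rfl
  refine ⟨f0.extend e, ?_, ?_⟩
  · have h1 := ContinuousLinearMap.opNorm_extend_le f0 h_dense h_e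
    have h2 : ‖f0‖ ≤ ‖φ‖ * ‖ψ‖ :=
      LinearMap.mkContinuous_norm_le linF (mul_nonneg (norm_nonneg φ) (norm_nonneg ψ)) hlinF_bound
    calc ‖_‖ ≤ (1:ℝ≥0) * ‖f0‖ := h1
      _ = ‖f0‖ := by rw [NNReal.coe_one, one_mul]
      _ ≤ ‖φ‖ * ‖ψ‖ := h2
  · intro a b
    have hmem : h.tmul a b ∈ S := ⟨a ⊗ₜ[ℝ] b, hT_tmul a b⟩
    have h1 : h.tmul a b = e ⟨h.tmul a b, hmem⟩ := rfl
    rw [h1, ContinuousLinearMap.extend_eq f0 h_dense (ContinuousLinearMap.isUniformEmbedding_of_bound e h_e).isUniformInducing]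
    rw [hf0]
    rw [LinearMap.mkContinuous_apply]
    rw [hlinF_val (a ⊗ₜ[ℝ] b) ⟨h.tmul a b, hmem⟩ (hT_tmul a b).symm]
    exact hg_tmul a b


lemma weaklyNull_bounded {E : Type*} [NormedAddCommGroup E] [NormedSpace ℝ E]
    (x : ℕ → E) (hx : WeaklyNull x) : ∃ M : ℝ, 0 ≤ M ∧ ∀ n, ‖x n‖ ≤ M := by
  have hpt : ∀ φ : E →L[ℝ] ℝ, ∃ Cφ : ℝ,
      ∀ n, ‖(NormedSpace.inclusionInDoubleDual ℝ E (x n)) φ‖ ≤ Cφ := by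
    intro φ
    obtain ⟨Cφ, hC⟩ := (hx φ).norm.bddAbove_range
    exact ⟨Cφ, fun n => by
      have := hC (Set.mem_range_self n)
      simpa [NormedSpace.dual_def] using this⟩
  obtain ⟨Cb, hCb⟩ := banach_steinhaus
    (g := fun n => NormedSpace.inclusionInDoubleDual ℝ E (x n)) hpt
  refine ⟨max Cb 0, le_max_right _ _, fun n => ?_⟩
  refine NormedSpace.norm_le_dual_bound ℝ (x n) (le_max_right _ _) fun f => ?_
  calc ‖f (x n)‖ = ‖(NormedSpace.inclusionInDoubleDual ℝ E (x n)) f‖ := by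
        rw [NormedSpace.dual_def]
    _ ≤ ‖NormedSpace.inclusionInDoubleDual ℝ E (x n)‖ * ‖f‖ :=
        ContinuousLinearMap.le_opNorm _ _
    _ ≤ max Cb 0 * ‖f‖ :=
        mul_le_mul_of_nonneg_right ((hCb n).trans (le_max_left _ _)) (norm_nonneg f)

lemma exists_delta_subseq {E : Type*} [NormedAddCommGroup E]
    (x : ℕ → E) (hx : ¬ Tendsto x atTop (𝓝 0)) :
    ∃ (δ : ℝ) (k : ℕ → ℕ), 0 < δ ∧ StrictMono k ∧ ∀ n, δ ≤ ‖x (k n)‖ := by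
  have h1 : ∃ δ > 0, ∀ N, ∃ n > N, δ ≤ ‖x n‖ := by
    by_contra hc
    push_neg at hc
    apply hx
    rw [Metric.tendsto_atTop]
    intro ε hε
    obtain ⟨N, hN⟩ := hc ε hε
    refine ⟨N + 1, fun n hn => ?_⟩
    rw [dist_zero_right]
    exact hN n (by omega)
  obtain ⟨δ, hδ, hfreq⟩ := h1
  obtain ⟨k, hk, hkP⟩ := extraction_of_frequently_atTop (frequently_atTop'.mpr hfreq)
  exact ⟨δ, k, hδ, hk, hkP⟩


set_option maxHeartbeats 2000000 in
/-- If neither `E` nor `F*` has the Schur property and every operator `F* → E**` is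
completely continuous, then `E ⊗̂ε F` fails the Dunford–Pettis property. -/
theorem injectiveTensorProduct_not_dunfordPettis
    {E F X : Type*} [NormedAddCommGroup E] [NormedSpace ℝ E] [CompleteSpace E]
    [NormedAddCommGroup F] [NormedSpace ℝ F] [CompleteSpace F]
    [NormedAddCommGroup X] [NormedSpace ℝ X] [CompleteSpace X]
    (h : InjectiveTensorProduct X E F)
    (hE : ¬ SchurProperty E)
    (hF : ¬ SchurProperty (F →L[ℝ] ℝ))
    (hcc : ∀ T : (F →L[ℝ] ℝ) →L[ℝ] ((E →L[ℝ] ℝ) →L[ℝ] ℝ),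
      CompletelyContinuous (E := F →L[ℝ] ℝ) (F := (E →L[ℝ] ℝ) →L[ℝ] ℝ) T) :
    ¬ DunfordPettisProperty X := by
  intro hDPP
  classical
  unfold SchurProperty at hE hF
  push_neg at hE hF
  obtain ⟨x0, hx0w, hx0n⟩ := hE
  obtain ⟨ψ0, hψ0w, hψ0n⟩ := hF
  obtain ⟨δx, kx, hδx, hkx, hxlb⟩ := exists_delta_subseq x0 hx0n
  obtain ⟨δψ, kψ, hδψ, hkψ, hψlb⟩ := exists_delta_subseq ψ0 hψ0n
  set xs : ℕ → E := fun n => x0 (kx n) with hxs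
  set ψs : ℕ → (F →L[ℝ] ℝ) := fun n => ψ0 (kψ n) with hψs
  have hxsw : WeaklyNull xs := fun φ => (hx0w φ).comp hkx.tendsto_atTop
  have hψsw : WeaklyNull ψs := fun Ξ => (hψ0w Ξ).comp hkψ.tendsto_atTop
  obtain ⟨Mx, hMx0, hMx⟩ := weaklyNull_bounded xs hxsw
  -- norming functionals for xs
  have hxs0 : ∀ n, xs n ≠ 0 := by
    intro n hn
    have := hxlb n
    rw [show x0 (kx n) = xs n from rfl, hn, norm_zero] at this
    linarith
  choose φs hφs1 hφsx using fun n => exists_dual_vector ℝ (xs n) (norm_ne_zero_iff.mpr (hxs0 n))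
  -- near-norming vectors for ψs
  have hys : ∀ n, ∃ y : F, ‖y‖ ≤ 1 ∧ δψ / 2 ≤ (ψs n) y := by
    intro n
    have hlt : δψ / 2 < ‖ψs n‖ := lt_of_lt_of_le (by linarith) (hψlb n)
    obtain ⟨y, hy1, hy2⟩ := (ψs n).exists_lt_apply_of_lt_opNorm hlt
    rcases le_or_gt 0 ((ψs n) y) with hpos | hneg
    · refine ⟨y, hy1.le, ?_⟩
      rw [Real.norm_eq_abs, abs_of_nonneg hpos] at hy2
      linarith
    · refine ⟨-y, by rw [norm_neg]; exact hy1.le, ?_⟩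
      rw [map_neg]
      rw [Real.norm_eq_abs, abs_of_neg hneg] at hy2
      linarith
  choose ys hys1 hys2 using hys
  -- norm bound for sums of elementary tensors
  have hsSup_le : ∀ (n : ℕ) (u : Fin n → E) (v : Fin n → F) (b : ℝ), 0 ≤ b →
      (∀ (φ : E →L[ℝ] ℝ) (ψ : F →L[ℝ] ℝ), ‖φ‖ ≤ 1 → ‖ψ‖ ≤ 1 →
        |∑ i, φ (u i) * ψ (v i)| ≤ b) →
      ‖∑ i, h.tmul (u i) (v i)‖ ≤ b := by
    intro n u v b hb hball
    rw [h.norm_sum n u v]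
    refine Real.sSup_le ?_ hb
    rintro r ⟨φ, ψ, hφ, hψ, rfl⟩
    exact hball φ ψ hφ hψ
  -- extensionality on elementary tensors
  have hext : ∀ Φ₁ Φ₂ : X →L[ℝ] ℝ, (∀ a b, Φ₁ (h.tmul a b) = Φ₂ (h.tmul a b)) → Φ₁ = Φ₂ := by
    intro Φ₁ Φ₂ hagree
    refine ContinuousLinearMap.ext_on h.dense_span ?_
    rintro z ⟨⟨a, b⟩, rfl⟩
    exact hagree a b
  -- the lifted tensor functionals
  obtain ⟨lam, lam_norm, lam_tmul⟩ :
      ∃ lam : (E →L[ℝ] ℝ) → (F →L[ℝ] ℝ) → (X →L[ℝ] ℝ),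
        (∀ φ ψ, ‖lam φ ψ‖ ≤ ‖φ‖ * ‖ψ‖) ∧
        (∀ φ ψ a b, lam φ ψ (h.tmul a b) = φ a * ψ b) := by
    choose lam h1 h2 using fun (φ : E →L[ℝ] ℝ) (ψ : F →L[ℝ] ℝ) =>
      exists_tensor_functional h φ ψ
    exact ⟨lam, h1, h2⟩
  have lam_addl : ∀ φ₁ φ₂ ψ, lam (φ₁ + φ₂) ψ = lam φ₁ ψ + lam φ₂ ψ := by
    intro φ₁ φ₂ ψ
    refine hext _ _ fun a b => ?_
    rw [ContinuousLinearMap.add_apply, lam_tmul, lam_tmul, lam_tmul,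
      ContinuousLinearMap.add_apply]
    ring
  have lam_smull : ∀ (c : ℝ) (φ ψ), lam (c • φ) ψ = c • lam φ ψ := by
    intro c φ ψ
    refine hext _ _ fun a b => ?_
    rw [ContinuousLinearMap.smul_apply, lam_tmul, lam_tmul,
      ContinuousLinearMap.smul_apply]
    simp only [smul_eq_mul]
    ring
  have lam_addr : ∀ φ ψ₁ ψ₂, lam φ (ψ₁ + ψ₂) = lam φ ψ₁ + lam φ ψ₂ := by
    intro φ ψ₁ ψ₂
    refine hext _ _ fun a b => ?_
    rw [ContinuousLinearMap.add_apply, lam_tmul, lam_tmul, lam_tmul,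
      ContinuousLinearMap.add_apply]
    ring
  have lam_smulr : ∀ (c : ℝ) (φ ψ), lam φ (c • ψ) = c • lam φ ψ := by
    intro c φ ψ
    refine hext _ _ fun a b => ?_
    rw [ContinuousLinearMap.smul_apply, lam_tmul, lam_tmul,
      ContinuousLinearMap.smul_apply]
    simp only [smul_eq_mul]
    ring
  -- the sequences witnessing failure of DPP
  set us : ℕ → X := fun n => h.tmul (xs n) (ys n) with hus
  set Φs : ℕ → (X →L[ℝ] ℝ) := fun n => lam (φs n) (ψs n) with hΦs
  -- us is weakly null
  have husw : WeaklyNull us := by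
    intro Φ
    set Nf : E → ℝ := fun z => ‖Φ.comp (h.tmul z)‖ with hNf
    have hNtend : Tendsto (fun n => Nf (xs n)) atTop (𝓝 0) := by
      refine summing_tendsto_zero Nf (fun z => norm_nonneg _) ?_ ‖Φ‖ ?_ xs Mx hMx hxsw
      · intro c z hc
        have h1 : h.tmul (c • z) = c • h.tmul z := (h.tmul).map_smul c z
        show ‖Φ.comp (h.tmul (c • z))‖ = c * ‖Φ.comp (h.tmul z)‖
        rw [h1]
        have h2 : Φ.comp (c • h.tmul z) = c • Φ.comp (h.tmul z) := by
          apply ContinuousLinearMap.ext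
          intro y
          simp
        rw [h2]
        have h3 : ‖c • Φ.comp (h.tmul z)‖ = ‖c‖ * ‖Φ.comp (h.tmul z)‖ :=
          norm_smul c (Φ.comp (h.tmul z))
        rw [h3, Real.norm_eq_abs, abs_of_nonneg hc]
      · intro n u ε hε b hb
        have hb0 : 0 ≤ b := by
          have := hb 0 (by simp)
          simpa using this
        -- choose near-norming vectors
        have hv : ∀ i : Fin n, ∃ v : F, ‖v‖ ≤ 1 ∧
            Nf (u i) ≤ (Φ.comp (h.tmul (u i))) v + ε / (n + 1) := by
          intro i
          have hεn : 0 < ε / (n + 1) := by positivity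
          rcases le_or_gt (Nf (u i)) (ε / (n + 1)) with hsmall | hbig
          · exact ⟨0, by simp, by simpa using hsmall⟩
          · have hlt : Nf (u i) - ε / (n + 1) < ‖Φ.comp (h.tmul (u i))‖ := by
              rw [hNf] at hbig ⊢
              linarith
            obtain ⟨w, hw1, hw2⟩ := (Φ.comp (h.tmul (u i))).exists_lt_apply_of_lt_opNorm hlt
            rcases le_or_gt 0 ((Φ.comp (h.tmul (u i))) w) with hpos | hneg
            · refine ⟨w, hw1.le, ?_⟩
              rw [Real.norm_eq_abs, abs_of_nonneg hpos] at hw2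
              linarith
            · refine ⟨-w, by rw [norm_neg]; exact hw1.le, ?_⟩
              rw [map_neg]
              rw [Real.norm_eq_abs, abs_of_neg hneg] at hw2
              linarith
        choose v hv1 hv2 using hv
        have hΦsum : ∑ i, (Φ.comp (h.tmul (u i))) (v i) = Φ (∑ i, h.tmul (u i) (v i)) := by
          rw [map_sum]
          rfl
        have hnormb : ‖∑ i, h.tmul (u i) (v i)‖ ≤ b := by
          refine hsSup_le n u v b hb0 ?_
          intro φ ψ hφ hψ
          calc |∑ i, φ (u i) * ψ (v i)| ≤ ∑ i, |φ (u i) * ψ (v i)| :=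
                Finset.abs_sum_le_sum_abs _ _
            _ ≤ ∑ i, |φ (u i)| := by
                refine Finset.sum_le_sum fun i _ => ?_
                rw [abs_mul]
                have hψv : |ψ (v i)| ≤ 1 := by
                  have := ψ.le_opNorm (v i)
                  rw [Real.norm_eq_abs] at this
                  calc |ψ (v i)| ≤ ‖ψ‖ * ‖v i‖ := this
                    _ ≤ 1 * 1 := mul_le_mul hψ (hv1 i) (norm_nonneg _) zero_le_one
                    _ = 1 := one_mul 1
                calc |φ (u i)| * |ψ (v i)| ≤ |φ (u i)| * 1 :=
                      mul_le_mul_of_nonneg_left hψv (abs_nonneg _)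
                  _ = |φ (u i)| := mul_one _
            _ ≤ b := hb φ hφ
        have hcount : ∑ _i : Fin n, ε / (n + 1) ≤ ε := by
          rw [Finset.sum_const, Finset.card_univ, Fintype.card_fin, nsmul_eq_mul]
          have hpos : (0:ℝ) < (n : ℝ) + 1 := by positivity
          rw [← mul_div_assoc, div_le_iff₀ hpos]
          nlinarith [hε.le]
        calc ∑ i, Nf (u i) ≤ ∑ i, ((Φ.comp (h.tmul (u i))) (v i) + ε / (n + 1)) :=
              Finset.sum_le_sum fun i _ => hv2 i
          _ = Φ (∑ i, h.tmul (u i) (v i)) + ∑ _i : Fin n, ε / (n + 1) := by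
              rw [Finset.sum_add_distrib, hΦsum]
          _ ≤ ‖Φ‖ * b + ε := by
              have h3 : Φ (∑ i, h.tmul (u i) (v i)) ≤ ‖Φ‖ * b := by
                calc Φ (∑ i, h.tmul (u i) (v i)) ≤ |Φ (∑ i, h.tmul (u i) (v i))| :=
                      le_abs_self _
                  _ ≤ ‖Φ‖ * ‖∑ i, h.tmul (u i) (v i)‖ := by
                      rw [← Real.norm_eq_abs]
                      exact Φ.le_opNorm _
                  _ ≤ ‖Φ‖ * b := mul_le_mul_of_nonneg_left hnormb (norm_nonneg Φ)
              linarith [hcount]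
    refine squeeze_zero_norm (fun n => ?_) hNtend
    show ‖Φ (h.tmul (xs n) (ys n))‖ ≤ Nf (xs n)
    calc ‖Φ (h.tmul (xs n) (ys n))‖ = ‖(Φ.comp (h.tmul (xs n))) (ys n)‖ := rfl
      _ ≤ ‖Φ.comp (h.tmul (xs n))‖ * ‖ys n‖ := ContinuousLinearMap.le_opNorm _ _
      _ ≤ Nf (xs n) * 1 := mul_le_mul_of_nonneg_left (hys1 n) (norm_nonneg _)
      _ = Nf (xs n) := mul_one _
  -- Φs is weakly null (using complete continuity hypothesis)
  have hΦsw : WeaklyNull Φs := by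
    intro Θ
    set TΘin : (F →L[ℝ] ℝ) → ((E →L[ℝ] ℝ) →L[ℝ] ℝ) := fun ψ =>
      LinearMap.mkContinuous
        { toFun := fun φ => Θ (lam φ ψ)
          map_add' := fun φ₁ φ₂ => by simp only [lam_addl, map_add]
          map_smul' := fun c φ => by
            simp only [lam_smull, ContinuousLinearMap.map_smul, RingHom.id_apply,
              smul_eq_mul] }
        (‖Θ‖ * ‖ψ‖)
        (fun φ => by
          calc ‖Θ (lam φ ψ)‖ ≤ ‖Θ‖ * ‖lam φ ψ‖ := Θ.le_opNorm _
            _ ≤ ‖Θ‖ * (‖φ‖ * ‖ψ‖) :=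
                mul_le_mul_of_nonneg_left (lam_norm φ ψ) (norm_nonneg Θ)
            _ = ‖Θ‖ * ‖ψ‖ * ‖φ‖ := by ring) with hTΘin
    have hTΘin_apply : ∀ ψ φ, TΘin ψ φ = Θ (lam φ ψ) := fun ψ φ => rfl
    have hTΘin_norm : ∀ ψ, ‖TΘin ψ‖ ≤ ‖Θ‖ * ‖ψ‖ := by
      intro ψ
      refine ContinuousLinearMap.opNorm_le_bound _
        (mul_nonneg (norm_nonneg Θ) (norm_nonneg ψ)) ?_
      intro φ
      rw [hTΘin_apply]
      calc ‖Θ (lam φ ψ)‖ ≤ ‖Θ‖ * ‖lam φ ψ‖ := Θ.le_opNorm _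
        _ ≤ ‖Θ‖ * (‖φ‖ * ‖ψ‖) :=
            mul_le_mul_of_nonneg_left (lam_norm φ ψ) (norm_nonneg Θ)
        _ = ‖Θ‖ * ‖ψ‖ * ‖φ‖ := by ring
    set TΘ : (F →L[ℝ] ℝ) →L[ℝ] ((E →L[ℝ] ℝ) →L[ℝ] ℝ) :=
      LinearMap.mkContinuous
        { toFun := TΘin
          map_add' := fun ψ₁ ψ₂ => by
            apply ContinuousLinearMap.ext
            intro φ
            rw [ContinuousLinearMap.add_apply, hTΘin_apply, hTΘin_apply, hTΘin_apply,
              lam_addr, map_add]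
          map_smul' := fun c ψ => by
            apply ContinuousLinearMap.ext
            intro φ
            rw [RingHom.id_apply, ContinuousLinearMap.smul_apply, hTΘin_apply, hTΘin_apply,
              lam_smulr, ContinuousLinearMap.map_smul]
            try rfl }
        ‖Θ‖
        (fun ψ => hTΘin_norm ψ) with hTΘ
    have hTΘ_apply : ∀ ψ φ, TΘ ψ φ = Θ (lam φ ψ) := fun ψ φ => rfl
    have hccT := hcc TΘ ψs 0 (fun Ξ => by
      rw [map_zero]
      exact hψsw Ξ)
    rw [map_zero] at hccT
    have hnorm0 : Tendsto (fun n => ‖TΘ (ψs n)‖) atTop (𝓝 0) :=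
      by
        have h0 := @tendsto_norm_zero ((E →L[ℝ] ℝ) →L[ℝ] ℝ) _
        exact h0.comp hccT
    refine squeeze_zero_norm (fun n => ?_) hnorm0
    show ‖Θ (Φs n)‖ ≤ ‖TΘ (ψs n)‖
    calc ‖Θ (Φs n)‖ = ‖TΘ (ψs n) (φs n)‖ := by rw [hTΘ_apply]
      _ ≤ ‖TΘ (ψs n)‖ * ‖φs n‖ := ContinuousLinearMap.le_opNorm _ _
      _ = ‖TΘ (ψs n)‖ := by rw [hφs1 n, mul_one]
  have hfinal := hDPP us Φs husw hΦsw
  have hval : ∀ n, δx * (δψ / 2) ≤ Φs n (us n) := by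
    intro n
    show δx * (δψ / 2) ≤ lam (φs n) (ψs n) (h.tmul (xs n) (ys n))
    rw [lam_tmul]
    have h1 : δx ≤ φs n (xs n) := by
      have := hφsx n
      rw [this]
      exact hxlb n
    have h2 := hys2 n
    have h3 : (0:ℝ) ≤ δψ / 2 := by linarith
    calc δx * (δψ / 2) ≤ φs n (xs n) * (ψs n (ys n)) :=
          mul_le_mul h1 h2 h3 (by linarith [hxlb n, hδx, h1])
      _ = _ := rfl
  rw [Metric.tendsto_atTop] at hfinal
  obtain ⟨Nn, hNn⟩ := hfinal (δx * (δψ / 2)) (by positivity)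
  have h5 := hNn Nn le_rfl
  rw [Real.dist_eq, sub_zero] at h5
  have h6 := (hval Nn).trans (le_abs_self _)
  linarith
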